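/- Let X ⊆ A^ℤ be a transitive subshift. Let C_X be the ℝ-vector space of letter-coboundaries on X, let F_X be the ℝ-vector space of maps ρ : A → ℝ that are constant on C for each C ∈ P_X^R, and let F_X^0 ⊆ F_X be the subspace of constant maps. For ρ ∈ F_X let c_ρ : A* → ℝ be the monoid morphism with c_ρ(a) = ρ(b) − ρ(a), where b is any letter with ab ∈ L(X) (this is well defined). Then the sequence 0 → F_X^0 → F_X → C_X → 0, where the first map is inclusion and the second is ρ ↦ c_ρ, is a short exact sequence of ℝ-vector spaces: ρ ↦ c_ρ is surjective and its kernel is exactly F_X^0. In particular, dim_ℝ C_X = r − 1, where r is the number of connected components of the extension graph Γ_X(ε) of the empty word. -/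

import Mathlib

open Filter Topology MeasureTheory

namespace SAdicPaper

variable {A B : Type*}

/-! ### Basic symbolic dynamics on the full shift `ℤ → A` -/

/-- The shift map `S` on the full shift. -/
def shift (x : ℤ → A) : ℤ → A := fun n => x (n + 1)

/-- The iterate `S^k` of the shift, for `k : ℤ`. -/
def shiftIter (k : ℤ) (x : ℤ → A) : ℤ → A := fun n => x (n + k)

/-- The finite word `x_i x_{i+1} ⋯ x_{i+l-1}`. -/
def window (x : ℤ → A) (i : ℤ) (l : ℕ) : List A :=
  (List.range l).map fun k => x (i + (k : ℤ))

/-- A subshift: a closed shift-invariant subset of the full shift. -/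
def IsSubshift [TopologicalSpace A] (X : Set (ℤ → A)) : Prop :=
  IsClosed X ∧ shift '' X = X

/-- The language of a set of bi-infinite sequences: all finite factors of its points. -/
def langOf (X : Set (ℤ → A)) : Set (List A) :=
  {w | ∃ x ∈ X, ∃ i : ℤ, w = window x i w.length}

/-- The (two-sided) orbit of a point under the shift. -/
def orbit (x : ℤ → A) : Set (ℤ → A) := Set.range fun k : ℤ => shiftIter k x

/-- A minimal subshift: nonempty and every orbit is dense. -/
def IsMinimalSubshift [TopologicalSpace A] (X : Set (ℤ → A)) : Prop :=
  IsSubshift X ∧ X.Nonempty ∧ ∀ x ∈ X, X ⊆ closure (orbit x)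

/-- A transitive subshift: some orbit is dense. -/
def IsTransitiveSubshift [TopologicalSpace A] (X : Set (ℤ → A)) : Prop :=
  IsSubshift X ∧ ∃ x ∈ X, X ⊆ closure (orbit x)

/-- `α` is a continuous additive eigenvalue of `(X, S)`: there is a continuous
`g : X → ℝ/ℤ` with `g (S x) = g x + α (mod ℤ)`. -/
def IsEigenvalue [TopologicalSpace A] (X : Set (ℤ → A)) (α : ℝ) : Prop :=
  ∃ g : (ℤ → A) → AddCircle (1 : ℝ), ContinuousOn g X ∧
    ∀ x ∈ X, g (shift x) = g x + (α : AddCircle (1 : ℝ))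

/-- `‖x‖`: distance from a real number to the nearest integer. -/
noncomputable def dnint (x : ℝ) : ℝ := |x - round x|

/-- `{x}`: the centered fractional part, the unique element of `[-1/2, 1/2)`
such that `x + {x}` is an integer. -/
noncomputable def cfrac (x : ℝ) : ℝ := (⌈x - 1 / 2⌉ : ℤ) - x

/-- The cylinder `[u] = {x ∈ X : x_{[0,|u|)} = u}`. -/
def cyl (X : Set (ℤ → A)) (u : List A) : Set (ℤ → A) :=
  {x ∈ X | window x 0 u.length = u}

/-- The factor complexity `p_X(n)`. -/
noncomputable def pcomplex (X : Set (ℤ → A)) (n : ℕ) : ℕ :=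
  Set.ncard {w : List A | w ∈ langOf X ∧ w.length = n}

/-! ### Letter-coboundaries -/

/-- The extension of a map `c : A → ℝ` to the monoid morphism `A* → (ℝ, +)`. -/
def wsum (c : A → ℝ) (w : List A) : ℝ := (w.map c).sum

/-- `w` is a return word to the letter `a` in `X`: `w ++ [a] ∈ L(X)` and `w ++ [a]`
contains exactly two occurrences of `a`, one as a prefix and one as a suffix. -/
def IsReturnWord (X : Set (ℤ → A)) (a : A) (w : List A) : Prop :=
  w ++ [a] ∈ langOf X ∧ w.head? = some a ∧
    ∀ (i : ℕ) (h : i < w.length), 0 < i → w.get ⟨i, h⟩ ≠ a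

/-- A letter-coboundary on `X` (identified with its values on letters):
a morphism `A* → (ℝ, +)` vanishing on all return words to letters. -/
def IsLetterCoboundary (X : Set (ℤ → A)) (c : A → ℝ) : Prop :=
  ∀ (a : A) (w : List A), IsReturnWord X a w → wsum c w = 0

/-- `w` is a return word to the (nonempty) word `u` in `X`. -/
def IsReturnWordTo (X : Set (ℤ → A)) (u w : List A) : Prop :=
  w ≠ [] ∧ (w ++ u) ∈ langOf X ∧ u <+: (w ++ u) ∧
    ∀ i : ℕ, ((w ++ u).drop i).take u.length = u → i + u.length ≤ (w ++ u).length →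
      i = 0 ∨ i = w.length

/-! ### Extension graphs -/

/-- Vertices of the extension graph of `w`: two copies of the alphabet, restricted to the
letters that extend `w` on the corresponding side. -/
def extVertex (X : Set (ℤ → A)) (w : List A) : A ⊕ A → Prop
  | Sum.inl a => (a :: w) ∈ langOf X
  | Sum.inr b => (w ++ [b]) ∈ langOf X

/-- The edge relation of the extension graph: `a_L — b_R` when `a w b ∈ L(X)`. -/
def extAdjRaw (X : Set (ℤ → A)) (w : List A) (u v : A ⊕ A) : Prop :=
  ∃ a b, u = Sum.inl a ∧ v = Sum.inr b ∧ (a :: (w ++ [b])) ∈ langOf X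

/-- The extension graph `Γ_X(w)` of a word `w` in `X`. -/
def extGraph (X : Set (ℤ → A)) (w : List A) :
    SimpleGraph {v : A ⊕ A // extVertex X w v} where
  Adj u v := extAdjRaw X w u.1 v.1 ∨ extAdjRaw X w v.1 u.1
  symm := ⟨fun u v h => Or.symm h⟩
  loopless := ⟨by
    rintro ⟨v, hv⟩ h
    rcases h with ⟨a, b, h1, h2, -⟩ | ⟨a, b, h1, h2, -⟩ <;> (rw [h1] at h2; simp at h2)⟩

/-- The total number of connected components of the extension graphs of all
words of length `m` in `L(X)`. -/
noncomputable def totalComponents (X : Set (ℤ → A)) (m : ℕ) : ℕ :=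
  Nat.card (Σ w : {w : List A // w ∈ langOf X ∧ w.length = m},
    (extGraph X w.1).ConnectedComponent)

/-! ### The vector space of letter-coboundaries -/

lemma wsum_zero (w : List A) : wsum (0 : A → ℝ) w = 0 := by
  induction w with
  | nil => rfl
  | cons a t ih => simp [wsum, List.map_cons, List.sum_cons] at ih ⊢; exact ih

lemma wsum_add (c d : A → ℝ) (w : List A) :
    wsum (c + d) w = wsum c w + wsum d w := by
  induction w with
  | nil => simp [wsum]
  | cons a t ih =>
      simp only [wsum, List.map_cons, List.sum_cons, Pi.add_apply] at ih ⊢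
      rw [ih]; ring

lemma wsum_smul (r : ℝ) (c : A → ℝ) (w : List A) :
    wsum (r • c) w = r * wsum c w := by
  induction w with
  | nil => simp [wsum]
  | cons a t ih =>
      simp only [wsum, List.map_cons, List.sum_cons, Pi.smul_apply, smul_eq_mul] at ih ⊢
      rw [ih]; ring

/-- The `ℝ`-vector space `C_X` of letter-coboundaries on `X`. -/
def cobSpace (X : Set (ℤ → A)) : Submodule ℝ (A → ℝ) where
  carrier := {c | IsLetterCoboundary X c}
  zero_mem' := fun _ w _ => wsum_zero w
  add_mem' := by
    intro c d hc hd a w hw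
    rw [wsum_add, hc a w hw, hd a w hw, add_zero]
  smul_mem' := by
    intro r c hc a w hw
    rw [wsum_smul, hc a w hw, mul_zero]

/-! ### Directive sequences -/

variable {Alph : ℕ → Type*}

/-- `seg τ n k = τ_{n,n+k} = τ_n ∘ τ_{n+1} ∘ ⋯ ∘ τ_{n+k-1}`, applied to a letter. -/
def seg (τ : ∀ n, Alph (n + 1) → List (Alph n)) (n : ℕ) :
    (k : ℕ) → Alph (n + k) → List (Alph n)
  | 0, a => [a]
  | k + 1, a => (τ (n + k) a).flatMap (seg τ n k)

/-- `toZero τ n = τ_{0,n}`, applied to a letter. -/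
def toZero (τ : ∀ n, Alph (n + 1) → List (Alph n)) :
    (n : ℕ) → Alph n → List (Alph 0)
  | 0, a => [a]
  | n + 1, a => (τ n a).flatMap (toZero τ n)

/-- The height `h_n(u) = |τ_{0,n}(u)|` (so `h_0(u) = |u|`). -/
def heightW (τ : ∀ n, Alph (n + 1) → List (Alph n)) (n : ℕ) (u : List (Alph n)) : ℕ :=
  (u.flatMap (toZero τ n)).length

/-- Every `τ_n` is a substitution: non-erasing and letter-onto. -/
def IsDirective (τ : ∀ n, Alph (n + 1) → List (Alph n)) : Prop :=
  ∀ n, (∀ a : Alph (n + 1), τ n a ≠ []) ∧ ∀ b : Alph n, ∃ a : Alph (n + 1), b ∈ τ n a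

/-- The level-`n` language `L^{(n)}_τ`: the words occurring in some `τ_{n,m}(a)`, `m > n`. -/
def levelLang (τ : ∀ n, Alph (n + 1) → List (Alph n)) (n : ℕ) : Set (List (Alph n)) :=
  {w | ∃ k : ℕ, 0 < k ∧ ∃ a : Alph (n + k), w <:+: seg τ n k a}

/-- The level-`n` subshift `X^{(n)}_τ`: the points all of whose factors lie in `L^{(n)}_τ`.
`X_τ = levelShift τ 0`. -/
def levelShift (τ : ∀ n, Alph (n + 1) → List (Alph n)) (n : ℕ) : Set (ℤ → Alph n) :=
  {x | ∀ (i : ℤ) (l : ℕ), window x i l ∈ levelLang τ n}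

/-- Primitivity of a directive sequence. -/
def IsPrimitiveSeq (τ : ∀ n, Alph (n + 1) → List (Alph n)) : Prop :=
  ∀ n, ∃ k, 0 < k ∧ ∀ (a : Alph (n + k)) (b : Alph n), b ∈ seg τ n k a

/-- Positivity of a directive sequence: every letter of `A_n` occurs in every `τ_n(b)`. -/
def IsPositiveSeq (τ : ∀ n, Alph (n + 1) → List (Alph n)) : Prop :=
  ∀ (n : ℕ) (b : Alph (n + 1)) (a : Alph n), a ∈ τ n b

/-- `y` is the image of the bi-infinite sequence `x` under the substitution `σ`,
aligned so that `σ(x_0)` starts at position `0`. -/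
def SubstPoint (σ : B → List A) (x : ℤ → B) (y : ℤ → A) : Prop :=
  ∀ m : ℕ,
    window y (-(∑ t ∈ Finset.range m, ((σ (x (-1 - (t : ℤ)))).length : ℤ)))
        ((window x (-(m : ℤ)) (2 * m + 1)).flatMap σ).length
      = (window x (-(m : ℤ)) (2 * m + 1)).flatMap σ

/-- The base `B_n(a) = {τ_{0,n}(x) : x ∈ X^{(n)}_τ, x_0 = a}` of the Kakutani–Rokhlin tower. -/
def baseSet (τ : ∀ n, Alph (n + 1) → List (Alph n)) (n : ℕ) (a : Alph n) :
    Set (ℤ → Alph 0) :=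
  {y | ∃ x ∈ levelShift τ n, x 0 = a ∧ SubstPoint (toZero τ n) x y}

/-- Recognizability: for every `n ≥ 1`, the sets `S^k B_n(a)`, `a ∈ A_n`,
`0 ≤ k < h_n(a)`, are pairwise disjoint. -/
def IsRecognizable (τ : ∀ n, Alph (n + 1) → List (Alph n)) : Prop :=
  ∀ n : ℕ, 1 ≤ n → ∀ (a a' : Alph n) (k k' : ℕ),
    k < heightW τ n [a] → k' < heightW τ n [a'] → ¬(a = a' ∧ k = k') →
    Disjoint (shiftIter (k : ℤ) '' baseSet τ n a) (shiftIter (k' : ℤ) '' baseSet τ n a')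

/-- `min_{a ∈ A_n} |τ_{0,n}(a)| → ∞`. -/
def IsEverywhereGrowing (τ : ∀ n, Alph (n + 1) → List (Alph n)) : Prop :=
  ∀ N : ℕ, ∃ M : ℕ, ∀ n, M ≤ n → ∀ a : Alph n, N ≤ (toZero τ n a).length

/-- Decisiveness of an everywhere growing directive sequence. -/
def IsDecisive (τ : ∀ n, Alph (n + 1) → List (Alph n)) : Prop :=
  IsEverywhereGrowing τ ∧
  ∀ n : ℕ, ∃ l r : Alph (n + 1) → Alph n,
    ∀ a b : Alph (n + 1), [a, b] ∈ langOf (levelShift τ (n + 1)) →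
      (τ n b).head? = some (r a) ∧ (τ n a).getLast? = some (l b)

/-- Unimodularity: every incidence matrix has determinant `±1`. -/
def IsUnimodularSeq [∀ n, Fintype (Alph n)] [∀ n, DecidableEq (Alph n)]
    (τ : ∀ n, Alph (n + 1) → List (Alph n)) : Prop :=
  ∀ n, ∃ e : Alph n ≃ Alph (n + 1),
    (Matrix.det (Matrix.of fun b a : Alph n => ((τ n (e a)).count b : ℤ))).natAbs = 1

/-! ### Single substitutions -/

/-- Iteration `τ^m` of a substitution on a single alphabet, applied to a letter. -/
def substPow (τ : A → List A) : ℕ → A → List A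
  | 0, a => [a]
  | k + 1, a => (τ a).flatMap (substPow τ k)

/-- The substitutive subshift `X_τ` generated by the constant directive sequence `(τ)`. -/
def substShift (τ : A → List A) : Set (ℤ → A) :=
  {x | ∀ (i : ℤ) (l : ℕ), ∃ m : ℕ, 1 ≤ m ∧ ∃ a : A, window x i l <:+: substPow τ m a}

/-- The incidence matrix of a substitution (with real entries). -/
def incMat [DecidableEq A] (τ : A → List A) : Matrix A A ℝ :=
  Matrix.of fun b a => ((τ a).count b : ℝ)

/-- A primitive substitution: some power of its incidence matrix is strictly positive. -/
def IsPrimitiveSubst [Fintype A] [DecidableEq A] (τ : A → List A) : Prop :=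
  ∃ k : ℕ, 0 < k ∧ ∀ b a : A, 0 < (incMat τ ^ k) b a

/-- Aperiodicity: `X_τ` contains no shift-periodic point. -/
def IsAperiodicSubst (τ : A → List A) : Prop :=
  ∀ x ∈ substShift τ, ∀ p : ℕ, 0 < p → shiftIter (p : ℤ) x ≠ x

/-- The stable space `V_{X_τ}` of row vectors `v` with `v M_τ^n → 0`. -/
def stableSpace [Fintype A] [DecidableEq A] (τ : A → List A) : Submodule ℝ (A → ℝ) where
  carrier := {v | Tendsto (fun n : ℕ => Matrix.vecMul v (incMat τ ^ n)) atTop (nhds 0)}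
  zero_mem' := by
    simp only [Set.mem_setOf_eq, Matrix.zero_vecMul]
    exact tendsto_const_nhds
  add_mem' := by
    intro u v hu hv
    have := hu.add hv
    simp only [Set.mem_setOf_eq] at *
    simpa [Matrix.add_vecMul] using this
  smul_mem' := by
    intro r v hv
    have := hv.const_smul r
    simp only [Set.mem_setOf_eq] at *
    simpa [Matrix.smul_vecMul] using this

/-- `X` is balanced on the letter `a`. -/
def IsBalancedOnLetter [DecidableEq A] (X : Set (ℤ → A)) (a : A) : Prop :=
  ∃ C : ℕ, 0 < C ∧ ∀ w ∈ langOf X, ∀ w' ∈ langOf X, w.length = w'.length →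
    |(w.count a : ℤ) - (w'.count a : ℤ)| ≤ (C : ℤ)

/-- `X` is balanced on letters. -/
def IsBalancedOnLetters [DecidableEq A] (X : Set (ℤ → A)) : Prop :=
  ∀ a : A, IsBalancedOnLetter X a

/-- A function `f : X → ℝ` is balanced on a (minimal) subshift `X`. -/
def IsBalancedFn (X : Set (ℤ → A)) (f : (ℤ → A) → ℝ) : Prop :=
  ∃ C : ℝ, 0 < C ∧ ∀ x ∈ X, ∀ y ∈ X, ∀ n : ℕ, 1 ≤ n →
    |∑ i ∈ Finset.range (n + 1), (f (shiftIter (i : ℤ) x) - f (shiftIter (i : ℤ) y))| ≤ C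

/-- `ρ : A → ℝ` is constant on each member of the partition `P_X^R` of `A` determined by
the right-hand sides of the connected components of the extension graph of the empty word. -/
def constOnRightComponents {A : Type*} (X : Set (ℤ → A)) (ρ : A → ℝ) : Prop :=
  ∀ (a b : A) (ha : extVertex X ([] : List A) (Sum.inr a))
    (hb : extVertex X ([] : List A) (Sum.inr b)),
    (extGraph X ([] : List A)).Reachable ⟨Sum.inr a, ha⟩ ⟨Sum.inr b, hb⟩ → ρ a = ρ b

/-! ### Auxiliary lemmas for Theorem 3.7 -/

section Aux37

variable {A : Type*}

lemma wsum_append' (c : A → ℝ) (u v : List A) : wsum c (u ++ v) = wsum c u + wsum c v := by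
  simp [wsum]

lemma wsum_singleton' (c : A → ℝ) (a : A) : wsum c [a] = c a := by simp [wsum]

lemma window_eq (x : ℤ → A) (i : ℤ) (l : ℕ) :
    window x i l = (List.range l).map (fun k : ℕ => x (i + (k : ℤ))) := by
  simp [window]
  rw [← List.map_eq_flatMap, List.map_map]
  rfl

lemma window_length' (x : ℤ → A) (i : ℤ) (l : ℕ) : (window x i l).length = l := by
  rw [window_eq, List.length_map, List.length_range]

lemma window_zero' (x : ℤ → A) (i : ℤ) : window x i 0 = [] := by
  rw [window_eq]; rfl

lemma window_succ' (x : ℤ → A) (i : ℤ) (l : ℕ) :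
    window x i (l + 1) = window x i l ++ [x (i + l)] := by
  rw [window_eq, window_eq, List.range_succ]
  simp

lemma window_cons' (x : ℤ → A) (i : ℤ) (l : ℕ) :
    window x i (l + 1) = x i :: window x (i + 1) l := by
  rw [window_eq, window_eq, List.range_succ_eq_map, List.map_cons, List.map_map]
  simp only [Nat.cast_zero, add_zero]
  congr 1
  apply List.map_congr_left
  intro k _
  simp only [Function.comp_apply]
  congr 1
  push_cast
  ring

lemma window_one' (x : ℤ → A) (i : ℤ) : window x i 1 = [x i] := by
  rw [window_cons', window_zero']

lemma window_two' (x : ℤ → A) (i : ℤ) : window x i 2 = [x i, x (i + 1)] := by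
  rw [show (2:ℕ) = 1 + 1 from rfl, window_cons', window_one']

lemma window_add' (x : ℤ → A) (i : ℤ) (l m : ℕ) :
    window x i (l + m) = window x i l ++ window x (i + l) m := by
  induction m with
  | zero => simp [window_zero']
  | succ m ih =>
      rw [show l + (m+1) = (l + m) + 1 from rfl, window_succ', ih, window_succ',
        List.append_assoc]
      congr 3
      push_cast
      ring

lemma window_mem_lang {X : Set (ℤ → A)} {x : ℤ → A} (hx : x ∈ X) (i : ℤ) (l : ℕ) :
    window x i l ∈ langOf X :=
  ⟨x, hx, i, by rw [window_length']⟩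

/-- Every word of the language occurs in a point with dense orbit. -/
lemma factor_of_dense [TopologicalSpace A] [DiscreteTopology A]
    {X : Set (ℤ → A)} {x : ℤ → A} (hdense : X ⊆ closure (orbit x))
    {w : List A} (hw : w ∈ langOf X) : ∃ j : ℤ, w = window x j w.length := by
  obtain ⟨y, hy, i, hwy⟩ := hw
  set l := w.length with hl
  have hopen : IsOpen (⋂ k ∈ Finset.range l, {z : ℤ → A | z (i + k) = y (i + k)}) := by
    apply isOpen_biInter_finset
    intro k _
    have : {z : ℤ → A | z (i + (k:ℤ)) = y (i + (k:ℤ))}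
        = (fun z : ℤ → A => z (i + (k:ℤ))) ⁻¹' {y (i + (k:ℤ))} := rfl
    rw [this]
    exact (continuous_apply _).isOpen_preimage _ (isOpen_discrete _)
  have hyU : y ∈ ⋂ k ∈ Finset.range l, {z : ℤ → A | z (i + k) = y (i + k)} := by
    simp
  have hcl := hdense hy
  rw [mem_closure_iff] at hcl
  obtain ⟨z, hzU, hzorb⟩ := hcl _ hopen hyU
  obtain ⟨k, hk⟩ := hzorb
  refine ⟨i + k, ?_⟩
  rw [hwy, window_eq, window_eq]
  apply List.map_congr_left
  intro m hm
  rw [List.mem_range] at hm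
  simp only [Set.mem_iInter] at hzU
  have h1 := hzU m (Finset.mem_range.2 hm)
  rw [← hk] at h1
  simp only [shiftIter, Set.mem_setOf_eq] at h1
  rw [show i + k + (m:ℤ) = i + m + k by ring]
  exact h1.symm

lemma window_getElem (x : ℤ → A) (i : ℤ) (l k : ℕ) (h : k < (window x i l).length) :
    (window x i l)[k] = x (i + k) := by
  have hk : k < l := by rwa [window_length'] at h
  have : (window x i l)[k]'h
      = ((List.range l).map (fun k : ℕ => x (i + (k : ℤ))))[k]'(by simpa using hk) := by
    congr 1
    exact window_eq x i l
  rw [this]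
  simp

lemma pair_mem_lang {X : Set (ℤ → A)} {y : ℤ → A} (hy : y ∈ X) (i : ℤ) :
    [y i, y (i + 1)] ∈ langOf X := by
  have := window_mem_lang hy i 2
  rwa [window_two'] at this

lemma wsum_telescope {X : Set (ℤ → A)} {c ρ : A → ℝ}
    (hpair : ∀ a b : A, [a, b] ∈ langOf X → c a = ρ b - ρ a)
    {y : ℤ → A} (hy : y ∈ X) (i : ℤ) :
    ∀ k : ℕ, wsum c (window y i k) = ρ (y (i + k)) - ρ (y i) := by
  intro k
  induction k with
  | zero => simp [window_zero', wsum]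
  | succ k ih =>
    rw [window_succ', wsum_append', ih, wsum_singleton',
      hpair _ _ (pair_mem_lang hy (i + k))]
    have hcast : i + ((k + 1 : ℕ) : ℤ) = (i + k) + 1 := by push_cast; ring
    rw [hcast]
    ring

/-- If `c a = ρ b - ρ a` for every `ab ∈ L(X)` then `c` is a letter-coboundary. -/
lemma cob_of_pair {X : Set (ℤ → A)} {c ρ : A → ℝ}
    (hpair : ∀ a b : A, [a, b] ∈ langOf X → c a = ρ b - ρ a) :
    IsLetterCoboundary X c := by
  intro a w hw
  obtain ⟨hwl, hhead, -⟩ := hw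
  obtain ⟨y, hy, i, hrep⟩ := hwl
  set k := w.length with hk
  have hlen : (w ++ [a]).length = k + 1 := by simp [hk]
  rw [hlen, window_succ'] at hrep
  have h1 : w = window y i k ∧ [a] = [y (i + k)] :=
    List.append_inj hrep (by rw [window_length'])
  obtain ⟨hw1, hw2⟩ := h1
  have ha2 : y (i + k) = a := by
    have := hw2.symm
    simpa using this
  have hne : w ≠ [] := by
    intro h
    rw [h] at hhead
    simp at hhead
  obtain ⟨k', hk'⟩ : ∃ k', k = k' + 1 := by
    refine ⟨k - 1, ?_⟩
    have : k ≠ 0 := fun h => hne (List.length_eq_zero_iff.mp (hk ▸ h))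
    omega
  have ha1 : y i = a := by
    rw [hw1, hk', window_cons'] at hhead
    simpa using hhead
  rw [hw1, wsum_telescope hpair hy, ha2, ha1, sub_self]

/-- A letter-coboundary sums to zero along any window of a point of `X` whose
endpoints carry the same letter. -/
lemma vanish_between {X : Set (ℤ → A)} {c : A → ℝ} (hc : IsLetterCoboundary X c)
    {y : ℤ → A} (hy : y ∈ X) :
    ∀ k : ℕ, ∀ i : ℤ, y (i + k) = y i → wsum c (window y i k) = 0 := by
  intro k
  induction k using Nat.strong_induction_on with
  | _ k IH =>
  intro i hik
  rcases Nat.eq_zero_or_pos k with rfl | hkpos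
  · simp [window_zero', wsum]
  classical
  by_cases hm : ∃ m, 0 < m ∧ m < k ∧ y (i + m) = y i
  · set m := Nat.find hm with hmdef
    obtain ⟨hm0, hmk, hmy⟩ := Nat.find_spec hm
    have hmin : ∀ j, j < m → ¬(0 < j ∧ j < k ∧ y (i + j) = y i) := fun j hj => Nat.find_min hm hj
    -- first piece is a return word to `y i`
    have hw1 : wsum c (window y i m) = 0 := by
      apply hc (y i) (window y i m)
      refine ⟨?_, ?_, ?_⟩
      · have : window y i m ++ [y i] = window y i (m + 1) := by
          rw [window_succ', hmy]
        rw [this]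
        exact window_mem_lang hy i (m + 1)
      · obtain ⟨m', hm'⟩ : ∃ m', m = m' + 1 := ⟨m - 1, by omega⟩
        rw [hm', window_cons']
        rfl
      · intro j hj hj0 hEq
        have hjm : j < m := by rwa [window_length'] at hj
        apply hmin j hjm
        refine ⟨hj0, lt_trans hjm hmk, ?_⟩
        rw [List.get_eq_getElem, window_getElem] at hEq
        exact hEq
    -- second piece by strong induction
    have hw2 : wsum c (window y (i + m) (k - m)) = 0 := by
      apply IH (k - m) (by omega)
      have hcast : (i + m) + ((k - m : ℕ) : ℤ) = i + k := by
        rw [hmdef]; omega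
      rw [hcast, hik, hmy]
    have hsplit : window y i k = window y i m ++ window y (i + m) (k - m) := by
      have : k = m + (k - m) := by omega
      rw [this, window_add']
      simp
    rw [hsplit, wsum_append', hw1, hw2, add_zero]
  · -- the whole window is a return word to `y i`
    push_neg at hm
    apply hc (y i) (window y i k)
    refine ⟨?_, ?_, ?_⟩
    · have : window y i k ++ [y i] = window y i (k + 1) := by
        rw [window_succ', hik]
      rw [this]
      exact window_mem_lang hy i (k + 1)
    · obtain ⟨k', hk'⟩ : ∃ k', k = k' + 1 := ⟨k - 1, by omega⟩
      rw [hk', window_cons']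
      rfl
    · intro j hj hj0 hEq
      have hjk : j < k := by rwa [window_length'] at hj
      rw [List.get_eq_getElem, window_getElem] at hEq
      exact hm j hj0 hjk hEq

lemma wsum_nil' (c : A → ℝ) : wsum c [] = 0 := rfl

lemma wsum_cons' (c : A → ℝ) (a : A) (t : List A) : wsum c (a :: t) = c a + wsum c t := by
  simp [wsum]

/-- The cocycle `g(i)` given by summing `c` along the transitive point between `0` and `i`. -/
noncomputable def gfun (c : A → ℝ) (x : ℤ → A) (i : ℤ) : ℝ :=
  wsum c (window x 0 i.toNat) - wsum c (window x i (-i).toNat)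

lemma gfun_step (c : A → ℝ) (x : ℤ → A) (i : ℤ) :
    gfun c x (i + 1) = gfun c x i + c (x i) := by
  rcases le_or_gt 0 i with hi | hi
  · have h1 : (-(i+1)).toNat = 0 := by omega
    have h2 : (-i).toNat = 0 := by omega
    have h3 : (i+1).toNat = i.toNat + 1 := by omega
    unfold gfun
    rw [h1, h2, h3, window_zero', window_succ', wsum_append', wsum_singleton', wsum_nil']
    have h4 : (0 : ℤ) + (i.toNat : ℤ) = i := by omega
    rw [h4, window_zero', wsum_nil']
    ring
  · have h1 : (i+1).toNat = 0 := by omega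
    have h2 : i.toNat = 0 := by omega
    have h3 : (-i).toNat = (-(i+1)).toNat + 1 := by omega
    unfold gfun
    rw [h1, h2, h3, window_zero', window_cons', wsum_cons']
    ring

lemma gfun_sum (c : A → ℝ) (x : ℤ → A) (i : ℤ) :
    ∀ k : ℕ, gfun c x (i + k) = gfun c x i + wsum c (window x i k) := by
  intro k
  induction k with
  | zero => simp [window_zero', wsum_nil']
  | succ k ih =>
    have hcast : i + ((k + 1 : ℕ) : ℤ) = (i + k) + 1 := by push_cast; ring
    rw [hcast, gfun_step, ih, window_succ', wsum_append', wsum_singleton']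
    ring

lemma gfun_eq_of_le {X : Set (ℤ → A)} {c : A → ℝ} (hc : IsLetterCoboundary X c)
    {x : ℤ → A} (hx : x ∈ X) {i j : ℤ} (hij : i ≤ j) (hxy : x i = x j) :
    gfun c x i = gfun c x j := by
  have hcast : i + (((j - i).toNat : ℕ) : ℤ) = j := by omega
  have hsum := gfun_sum c x i (j - i).toNat
  rw [hcast] at hsum
  rw [hsum, vanish_between hc hx _ i (by rw [hcast, ← hxy]), add_zero]

lemma exists_occ [TopologicalSpace A] [DiscreteTopology A] {X : Set (ℤ → A)}
    {x : ℤ → A} (hdense : X ⊆ closure (orbit x)) {b : A} (hb : [b] ∈ langOf X) :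
    ∃ i : ℤ, x i = b := by
  obtain ⟨j, hj⟩ := factor_of_dense hdense hb
  rw [show ([b] : List A).length = 1 from rfl, window_one'] at hj
  exact ⟨j, by injection hj.symm⟩

/-- Part 2: every letter-coboundary comes from some `ρ` constant on right components. -/
lemma part2_aux [TopologicalSpace A] [DiscreteTopology A] {X : Set (ℤ → A)}
    (hX : IsTransitiveSubshift X) (hA : ∀ a : A, [a] ∈ langOf X)
    (c : A → ℝ) (hc : IsLetterCoboundary X c) :
    ∃ ρ : A → ℝ, constOnRightComponents X ρ ∧
      ∀ a b : A, [a, b] ∈ langOf X → c a = ρ b - ρ a := by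
  classical
  obtain ⟨-, x, hx, hdense⟩ := hX
  have hocc : ∀ b : A, ∃ i : ℤ, x i = b := fun b => exists_occ hdense (hA b)
  set ρ : A → ℝ := fun b => gfun c x (Classical.choose (hocc b)) with hρdef
  have hρocc : ∀ (b : A) (i : ℤ), x i = b → ρ b = gfun c x i := by
    intro b i hi
    have hsp : x (Classical.choose (hocc b)) = b := Classical.choose_spec (hocc b)
    rcases le_total (Classical.choose (hocc b)) i with h | h
    · exact gfun_eq_of_le hc hx h (by rw [hsp, hi])
    · exact (gfun_eq_of_le hc hx h (by rw [hsp, hi])).symm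
  have hkey : ∀ a b : A, [a, b] ∈ langOf X → c a = ρ b - ρ a := by
    intro a b hab
    obtain ⟨j, hj⟩ := factor_of_dense hdense hab
    rw [show ([a, b] : List A).length = 2 from rfl, window_two'] at hj
    have ha : x j = a := by injection hj.symm
    have hb : x (j + 1) = b := by
      have := hj.symm
      injection this with h1 h2
      injection h2
    have h1 : ρ a = gfun c x j := hρocc a j ha
    have h2 : ρ b = gfun c x (j + 1) := hρocc b (j + 1) hb
    rw [h1, h2, gfun_step, ha]
    ring
  refine ⟨ρ, ?_, hkey⟩
  intro a b ha hb hreach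
  let φ : {v : A ⊕ A // extVertex X ([] : List A) v} → ℝ := fun v =>
    match v with
    | ⟨Sum.inl u, _⟩ => ρ u + c u
    | ⟨Sum.inr d, _⟩ => ρ d
  have hone : ∀ (p q : {v : A ⊕ A // extVertex X ([] : List A) v}),
      extAdjRaw X ([] : List A) p.1 q.1 → φ p = φ q := by
    rintro ⟨pv, hp⟩ ⟨qv, hq⟩ ⟨u, d, h1, h2, hud⟩
    subst h1
    subst h2
    have hud' : [u, d] ∈ langOf X := by simpa using hud
    have := hkey u d hud'
    show ρ u + c u = ρ d
    linarith
  have hadj : ∀ v w, (extGraph X ([] : List A)).Adj v w → φ v = φ w := by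
    intro v w hvw
    rcases hvw with h | h
    · exact hone _ _ h
    · exact (hone _ _ h).symm
  have hreachEq : ∀ v w, (extGraph X ([] : List A)).Reachable v w → φ v = φ w := by
    intro v w hr
    obtain ⟨p⟩ := hr
    induction p with
    | nil => rfl
    | cons h q ih => exact (hadj _ _ h).trans ih
  exact hreachEq _ _ hreach

/-- Part 3: if `ρ b = ρ a` for every `ab ∈ L(X)` then `ρ` is constant. -/
lemma part3_aux [TopologicalSpace A] [DiscreteTopology A] {X : Set (ℤ → A)}
    (hX : IsTransitiveSubshift X) (hA : ∀ a : A, [a] ∈ langOf X)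
    (ρ : A → ℝ) (h : ∀ a b : A, [a, b] ∈ langOf X → ρ b - ρ a = 0) :
    ∀ a b : A, ρ a = ρ b := by
  obtain ⟨-, x, hx, hdense⟩ := hX
  have hstep : ∀ i : ℤ, ρ (x (i + 1)) = ρ (x i) := by
    intro i
    have := h _ _ (pair_mem_lang hx i)
    linarith
  have hconst : ∀ (i : ℤ) (k : ℕ), ρ (x (i + k)) = ρ (x i) := by
    intro i k
    induction k with
    | zero => simp
    | succ k ih =>
      have hcast : i + ((k + 1 : ℕ) : ℤ) = (i + k) + 1 := by push_cast; ring
      rw [hcast, hstep, ih]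
  intro a b
  obtain ⟨i, hi⟩ := exists_occ hdense (hA a)
  obtain ⟨j, hj⟩ := exists_occ hdense (hA b)
  rcases le_total i j with hij | hij
  · have hcast : i + (((j - i).toNat : ℕ) : ℤ) = j := by omega
    have := hconst i (j - i).toNat
    rw [hcast, hi, hj] at this
    exact this.symm
  · have hcast : j + (((i - j).toNat : ℕ) : ℤ) = i := by omega
    have := hconst j (i - j).toNat
    rw [hcast, hi, hj] at this
    exact this

lemma succ_letter {X : Set (ℤ → A)} {a : A} (ha : [a] ∈ langOf X) :
    ∃ b : A, [a, b] ∈ langOf X := by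
  obtain ⟨y, hy, i, hrep⟩ := ha
  rw [show ([a] : List A).length = 1 from rfl, window_one'] at hrep
  have hyi : y i = a := by injection hrep.symm
  exact ⟨y (i + 1), by rw [← hyi]; exact pair_mem_lang hy i⟩

lemma vertexL {X : Set (ℤ → A)} (hA : ∀ a : A, [a] ∈ langOf X) (a : A) :
    extVertex X ([] : List A) (Sum.inl a) := hA a

lemma vertexR {X : Set (ℤ → A)} (hA : ∀ a : A, [a] ∈ langOf X) (b : A) :
    extVertex X ([] : List A) (Sum.inr b) := by
  show ([] ++ [b]) ∈ langOf X
  simpa using hA b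

lemma adj_pair {X : Set (ℤ → A)} {a b : A} (hab : [a, b] ∈ langOf X)
    (ha : extVertex X ([] : List A) (Sum.inl a))
    (hb : extVertex X ([] : List A) (Sum.inr b)) :
    (extGraph X ([] : List A)).Adj ⟨Sum.inl a, ha⟩ ⟨Sum.inr b, hb⟩ :=
  Or.inl ⟨a, b, rfl, rfl, by simpa using hab⟩

lemma rho_pair_eq {X : Set (ℤ → A)} (hA : ∀ a : A, [a] ∈ langOf X) {ρ : A → ℝ}
    (hρ : constOnRightComponents X ρ) {a b b' : A}
    (h1 : [a, b] ∈ langOf X) (h2 : [a, b'] ∈ langOf X) : ρ b = ρ b' := by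
  have ha : extVertex X ([] : List A) (Sum.inl a) := vertexL hA a
  have hb := vertexR hA b
  have hb' := vertexR hA b'
  exact hρ b b' hb hb'
    (((adj_pair h1 ha hb).symm.reachable).trans (adj_pair h2 ha hb').reachable)

/-- Part 1: `c_ρ` is a well-defined letter-coboundary. -/
lemma part1_aux {X : Set (ℤ → A)} (hA : ∀ a : A, [a] ∈ langOf X)
    (ρ : A → ℝ) (hρ : constOnRightComponents X ρ)
    (nb : A → A) (hnb : ∀ a, [a, nb a] ∈ langOf X) :
    IsLetterCoboundary X (fun a => ρ (nb a) - ρ a) ∧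
      ∀ a b : A, [a, b] ∈ langOf X → ρ (nb a) - ρ a = ρ b - ρ a := by
  have hpair : ∀ a b : A, [a, b] ∈ langOf X → ρ (nb a) - ρ a = ρ b - ρ a := by
    intro a b hab
    rw [rho_pair_eq hA hρ (hnb a) hab]
  exact ⟨cob_of_pair (ρ := ρ) (fun a b h => hpair a b h), hpair⟩

set_option synthInstance.maxHeartbeats 1000000 in
set_option maxHeartbeats 1000000 in
/-- Part 4: the dimension count. -/
lemma part4_aux {A : Type*} [Fintype A] [TopologicalSpace A] [DiscreteTopology A]
    (X : Set (ℤ → A)) (hX : IsTransitiveSubshift X)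
    (hA : ∀ a : A, [a] ∈ langOf X) :
    Module.finrank ℝ ↥(cobSpace X)
      = Nat.card (extGraph X ([] : List A)).ConnectedComponent - 1 := by
  classical
  obtain ⟨x0⟩ : Nonempty A := by
    obtain ⟨-, x, hx, -⟩ := hX
    exact ⟨x 0⟩
  set G := extGraph X ([] : List A) with hG
  let FX : Submodule ℝ (A → ℝ) :=
    { carrier := {ρ | constOnRightComponents X ρ}
      zero_mem' := fun a b _ _ _ => rfl
      add_mem' := by
        intro ρ σ hρ hσ a b ha hb h
        show ρ a + σ a = ρ b + σ b
        rw [hρ a b ha hb h, hσ a b ha hb h]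
      smul_mem' := by
        intro r ρ hρ a b ha hb h
        show r * ρ a = r * ρ b
        rw [hρ a b ha hb h] }
  have hsucc : ∀ a : A, ∃ b, [a, b] ∈ langOf X := fun a => succ_letter (hA a)
  set nb : A → A := fun a => Classical.choose (hsucc a) with hnb0
  have hnb : ∀ a, [a, nb a] ∈ langOf X := fun a => Classical.choose_spec (hsucc a)
  let T : FX →ₗ[ℝ] ↥(cobSpace X) :=
    { toFun := fun ρ => ⟨fun a => ρ.1 (nb a) - ρ.1 a, (part1_aux hA ρ.1 ρ.2 nb hnb).1⟩
      map_add' := by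
        intro ρ σ
        apply Subtype.ext
        funext a
        show (ρ.1 + σ.1) (nb a) - (ρ.1 + σ.1) a = _
        simp only [Pi.add_apply]
        show _ = (ρ.1 (nb a) - ρ.1 a) + (σ.1 (nb a) - σ.1 a)
        ring
      map_smul' := by
        intro r ρ
        apply Subtype.ext
        funext a
        show (r • ρ.1) (nb a) - (r • ρ.1) a = r • (ρ.1 (nb a) - ρ.1 a)
        simp only [Pi.smul_apply, smul_eq_mul]
        ring }
  have hTsurj : Function.Surjective T := by
    rintro ⟨c, hc⟩
    obtain ⟨ρ, hρ, hkey⟩ := part2_aux hX hA c hc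
    refine ⟨⟨ρ, hρ⟩, ?_⟩
    apply Subtype.ext
    funext a
    show ρ (nb a) - ρ a = c a
    rw [hkey a (nb a) (hnb a)]
  have hker : ∀ ρ : FX, T ρ = 0 ↔ ∀ a b : A, ρ.1 a = ρ.1 b := by
    intro ρ
    constructor
    · intro h
      apply part3_aux hX hA
      intro a b hab
      have h0 : ρ.1 (nb a) - ρ.1 a = 0 := congrFun (congrArg Subtype.val h) a
      have h1 : ρ.1 (nb a) = ρ.1 b := rho_pair_eq hA ρ.2 (hnb a) hab
      linarith
    · intro h
      apply Subtype.ext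
      funext a
      show ρ.1 (nb a) - ρ.1 a = 0
      rw [h (nb a) a, sub_self]
  let ev : ↥(LinearMap.ker T) →ₗ[ℝ] ℝ :=
    { toFun := fun ρ => ρ.1.1 x0
      map_add' := fun _ _ => rfl
      map_smul' := fun _ _ => rfl }
  have hevbij : Function.Bijective ev := by
    constructor
    · intro ρ σ h
      have hρ := (hker ρ.1).1 (LinearMap.mem_ker.mp ρ.2)
      have hσ := (hker σ.1).1 (LinearMap.mem_ker.mp σ.2)
      apply Subtype.ext
      apply Subtype.ext
      funext a
      calc ρ.1.1 a = ρ.1.1 x0 := hρ a x0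
        _ = σ.1.1 x0 := h
        _ = σ.1.1 a := hσ x0 a
    · intro r
      refine ⟨⟨⟨fun _ => r, fun a b _ _ _ => rfl⟩, ?_⟩, rfl⟩
      rw [LinearMap.mem_ker, hker]
      exact fun a b => rfl
  have hcompfin : Finite G.ConnectedComponent := by
    have : Finite {v : A ⊕ A // extVertex X ([] : List A) v} := inferInstance
    exact Quot.finite _
  letI : Fintype G.ConnectedComponent := Fintype.ofFinite _
  have hrightv : ∀ K : G.ConnectedComponent,
      ∃ (b : A) (hb : extVertex X ([] : List A) (Sum.inr b)),
        G.connectedComponentMk ⟨Sum.inr b, hb⟩ = K := by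
    intro K
    obtain ⟨v, rfl⟩ := K.exists_rep
    obtain ⟨vv, hv⟩ := v
    match vv, hv with
    | Sum.inr b, hv => exact ⟨b, hv, rfl⟩
    | Sum.inl a, hv =>
      refine ⟨nb a, vertexR hA (nb a), ?_⟩
      apply SimpleGraph.ConnectedComponent.sound
      exact ((adj_pair (hnb a) hv (vertexR hA (nb a))).symm).reachable
  let E0 : (G.ConnectedComponent → ℝ) →ₗ[ℝ] (A → ℝ) :=
    { toFun := fun f a => f (G.connectedComponentMk ⟨Sum.inr a, vertexR hA a⟩)
      map_add' := fun _ _ => rfl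
      map_smul' := fun _ _ => rfl }
  have hE0mem : ∀ f, E0 f ∈ FX := by
    intro f a b ha hb h
    show f _ = f _
    congr 1
    exact SimpleGraph.ConnectedComponent.sound h
  let E : (G.ConnectedComponent → ℝ) →ₗ[ℝ] FX := E0.codRestrict FX hE0mem
  have hEbij : Function.Bijective E := by
    constructor
    · intro f g h
      funext K
      obtain ⟨b, hb, rfl⟩ := hrightv K
      have hfb : (E f).1 b = (E g).1 b := by rw [h]
      exact hfb
    · rintro ⟨ρ, hρ⟩
      refine ⟨fun K => ρ (Classical.choose (hrightv K)), ?_⟩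
      apply Subtype.ext
      funext a
      obtain ⟨hb, hmk⟩ :=
        Classical.choose_spec (hrightv (G.connectedComponentMk ⟨Sum.inr a, vertexR hA a⟩))
      exact hρ _ a hb (vertexR hA a) (SimpleGraph.ConnectedComponent.exact hmk)
  have h1 : Module.finrank ℝ (G.ConnectedComponent → ℝ) = Module.finrank ℝ FX :=
    (LinearEquiv.ofBijective E hEbij).finrank_eq
  have h2 : Module.finrank ℝ (G.ConnectedComponent → ℝ) = Nat.card G.ConnectedComponent := by
    rw [Module.finrank_pi, Nat.card_eq_fintype_card]
  have h3 : Module.finrank ℝ ↥(LinearMap.ker T) = 1 := by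
    rw [(LinearEquiv.ofBijective ev hevbij).finrank_eq, Module.finrank_self]
  have h4 : Module.finrank ℝ ↥(LinearMap.range T) = Module.finrank ℝ ↥(cobSpace X) := by
    rw [LinearMap.range_eq_top.mpr hTsurj]
    exact finrank_top ℝ _
  have h5 := LinearMap.finrank_range_add_finrank_ker T
  rw [h3, h4] at h5
  rw [← h2, h1, ← h5]
  omega

end Aux37

/-- **Theorem 3.7.** For a transitive subshift `X` (with every letter occurring), the
sequence `0 → F_X⁰ → F_X → C_X → 0`, with second map `ρ ↦ c_ρ`, is a short exact sequence
of `ℝ`-vector spaces: `ρ ↦ c_ρ` lands in `C_X` and is well defined, it is surjective, and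
its kernel is exactly the constants.  In particular `dim_ℝ C_X = r − 1`, where `r` is the
number of connected components of `Γ_X(ε)`. -/
theorem coboundary_short_exact_sequence
    {A : Type*} [Fintype A] [TopologicalSpace A] [DiscreteTopology A]
    (X : Set (ℤ → A)) (hX : IsTransitiveSubshift X)
    (hA : ∀ a : A, [a] ∈ langOf X) :
    (∀ ρ : A → ℝ, constOnRightComponents X ρ →
      ∃ c : A → ℝ, IsLetterCoboundary X c ∧
        ∀ a b : A, [a, b] ∈ langOf X → c a = ρ b - ρ a) ∧
    (∀ c : A → ℝ, IsLetterCoboundary X c →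
      ∃ ρ : A → ℝ, constOnRightComponents X ρ ∧
        ∀ a b : A, [a, b] ∈ langOf X → c a = ρ b - ρ a) ∧
    (∀ ρ : A → ℝ, constOnRightComponents X ρ →
      ((∀ a b : A, [a, b] ∈ langOf X → ρ b - ρ a = 0) ↔ ∀ a b : A, ρ a = ρ b)) ∧
    Module.finrank ℝ ↥(cobSpace X)
      = Nat.card (extGraph X ([] : List A)).ConnectedComponent - 1 := by
  classical
  have hsucc : ∀ a : A, ∃ b, [a, b] ∈ langOf X := fun a => succ_letter (hA a)
  set nb : A → A := fun a => Classical.choose (hsucc a) with hnb0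
  have hnb : ∀ a, [a, nb a] ∈ langOf X := fun a => Classical.choose_spec (hsucc a)
  refine ⟨?_, ?_, ?_, part4_aux X hX hA⟩
  · intro ρ hρ
    obtain ⟨hcob, hpair⟩ := part1_aux hA ρ hρ nb hnb
    exact ⟨fun a => ρ (nb a) - ρ a, hcob, hpair⟩
  · exact fun c hc => part2_aux hX hA c hc
  · intro ρ hρ
    constructor
    · intro h
      exact part3_aux hX hA ρ h
    · intro h a b _
      rw [h b a, sub_self]

end SAdicPaper
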